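/- arXiv:0802.2580 — 5 statements merged into one kernel-verified Lean document; each statement's English description precedes it below -/
import Mathlib

section
/- For a Euclidean triangle with angles a_i considered as functions of the edge lengths via the cosine law, one has ∂a_i/∂l_j = −(∂a_i/∂l_i)·cos(a_k), where {i,j,k} = {1,2,3}. -/
open Real

private lemma fin3_perm : ∀ i j k m n p : Fin 3, i ≠ j → j ≠ k → i ≠ k →
    m ≠ n → n ≠ p → m ≠ p →
    (m = i ∧ n = j ∧ p = k) ∨ (m = i ∧ n = k ∧ p = j) ∨
    (m = j ∧ n = i ∧ p = k) ∨ (m = j ∧ n = k ∧ p = i) ∨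
    (m = k ∧ n = i ∧ p = j) ∨ (m = k ∧ n = j ∧ p = i) := by decide

/-- For a Euclidean triangle with angles `a_i ∈ (0,π)` determined from the
edge lengths by the cosine law, one has ∂a_i/∂l_j = −(∂a_i/∂l_i)·cos(a_k). -/
theorem euclidean_deriv_angle_other
    (a : (Fin 3 → ℝ) → Fin 3 → ℝ)
    (ha : ∀ x : Fin 3 → ℝ, (∀ i, 0 < x i) →
      (∀ i j k : Fin 3, i ≠ j → j ≠ k → i ≠ k → x i < x j + x k) →
      ∀ i j k : Fin 3, i ≠ j → j ≠ k → i ≠ k →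
        a x i ∈ Set.Ioo 0 π ∧
        Real.cos (a x i) = (x j ^ 2 + x k ^ 2 - x i ^ 2) / (2 * x j * x k))
    (l : Fin 3 → ℝ) (hl : ∀ i, 0 < l i)
    (htri : ∀ i j k : Fin 3, i ≠ j → j ≠ k → i ≠ k → l i < l j + l k)
    (i j k : Fin 3) (hij : i ≠ j) (hjk : j ≠ k) (hik : i ≠ k)
    (d : ℝ) (hd : HasDerivAt (fun t => a (Function.update l i t) i) d (l i)) :
    HasDerivAt (fun t => a (Function.update l j t) i)
      (-d * Real.cos (a l k)) (l j) := by
  have hA := hl i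
  have hB := hl j
  have hC := hl k
  obtain ⟨haiI, hcosi⟩ := ha l hl htri i j k hij hjk hik
  obtain ⟨hakI, hcosk⟩ := ha l hl htri k i j (Ne.symm hik) hij (Ne.symm hjk)
  have hsin : 0 < Real.sin (a l i) := Real.sin_pos_of_pos_of_lt_pi haiI.1 haiI.2
  have hsq : Real.sin (a l i) = Real.sqrt (1 - Real.cos (a l i) ^ 2) :=
    Real.sin_eq_sqrt_one_sub_cos_sq haiI.1.le haiI.2.le
  have hs0 : 0 < Real.sqrt (1 - ((l j ^ 2 + l k ^ 2 - l i ^ 2) / (2 * l j * l k)) ^ 2) := by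
    rw [← hcosi, ← hsq]; exact hsin
  have hE2 : 0 < 1 - ((l j ^ 2 + l k ^ 2 - l i ^ 2) / (2 * l j * l k)) ^ 2 :=
    Real.sqrt_pos.mp hs0
  have hc1 : (l j ^ 2 + l k ^ 2 - l i ^ 2) / (2 * l j * l k) ≠ -1 := by
    intro h; rw [h] at hE2; norm_num at hE2
  have hc2 : (l j ^ 2 + l k ^ 2 - l i ^ 2) / (2 * l j * l k) ≠ 1 := by
    intro h; rw [h] at hE2; norm_num at hE2
  have key : ∀ x : Fin 3 → ℝ, (∀ m, 0 < x m) →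
      (∀ m n p : Fin 3, m ≠ n → n ≠ p → m ≠ p → x m < x n + x p) →
      a x i = Real.arccos ((x j ^ 2 + x k ^ 2 - x i ^ 2) / (2 * x j * x k)) := by
    intro x hx htx
    obtain ⟨hmem, hcos⟩ := ha x hx htx i j k hij hjk hik
    rw [← hcos, Real.arccos_cos hmem.1.le hmem.2.le]
  -- neighborhood in the i-th variable
  have hnbd_i : (fun t => a (Function.update l i t) i) =ᶠ[nhds (l i)]
      fun t => Real.arccos ((l j ^ 2 + l k ^ 2 - t ^ 2) / (2 * l j * l k)) := by
    have h1 : ∀ᶠ t in nhds (l i), 0 < t := eventually_gt_nhds hA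
    have h2 : ∀ᶠ t in nhds (l i), t < l j + l k :=
      eventually_lt_nhds (htri i j k hij hjk hik)
    have h3 : ∀ᶠ t in nhds (l i), l j - l k < t := by
      apply eventually_gt_nhds
      have := htri j k i hjk (Ne.symm hik) (Ne.symm hij); linarith
    have h4 : ∀ᶠ t in nhds (l i), l k - l j < t := by
      apply eventually_gt_nhds
      have := htri k j i (Ne.symm hjk) (Ne.symm hij) (Ne.symm hik); linarith
    filter_upwards [h1, h2, h3, h4] with t ht1 ht2 ht3 ht4
    have exi : Function.update l i t i = t := Function.update_self i t l
    have exj : Function.update l i t j = l j := Function.update_of_ne (Ne.symm hij) t l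
    have exk : Function.update l i t k = l k := Function.update_of_ne (Ne.symm hik) t l
    have hx : ∀ m, 0 < Function.update l i t m := by
      intro m
      rcases eq_or_ne m i with rfl | hm
      · rw [exi]; exact ht1
      · rw [Function.update_of_ne hm]; exact hl m
    have htx : ∀ m n p : Fin 3, m ≠ n → n ≠ p → m ≠ p →
        Function.update l i t m < Function.update l i t n + Function.update l i t p := by
      intro m n p hmn hnp hmp
      rcases fin3_perm i j k m n p hij hjk hik hmn hnp hmp with
        ⟨rfl, rfl, rfl⟩ | ⟨rfl, rfl, rfl⟩ | ⟨rfl, rfl, rfl⟩ | ⟨rfl, rfl, rfl⟩ |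
        ⟨rfl, rfl, rfl⟩ | ⟨rfl, rfl, rfl⟩ <;>
        simp only [exi, exj, exk] <;> linarith
    rw [key _ hx htx, exi, exj, exk]
  -- neighborhood in the j-th variable
  have hnbd_j : (fun t => a (Function.update l j t) i) =ᶠ[nhds (l j)]
      fun t => Real.arccos ((t ^ 2 + l k ^ 2 - l i ^ 2) / (2 * t * l k)) := by
    have h1 : ∀ᶠ t in nhds (l j), 0 < t := eventually_gt_nhds hB
    have h2 : ∀ᶠ t in nhds (l j), l i - l k < t := by
      apply eventually_gt_nhds
      have := htri i j k hij hjk hik; linarith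
    have h3 : ∀ᶠ t in nhds (l j), t < l k + l i := by
      apply eventually_lt_nhds
      have := htri j k i hjk (Ne.symm hik) (Ne.symm hij); linarith
    have h4 : ∀ᶠ t in nhds (l j), l k - l i < t := by
      apply eventually_gt_nhds
      have := htri k j i (Ne.symm hjk) (Ne.symm hij) (Ne.symm hik); linarith
    filter_upwards [h1, h2, h3, h4] with t ht1 ht2 ht3 ht4
    have exi : Function.update l j t i = l i := Function.update_of_ne hij t l
    have exj : Function.update l j t j = t := Function.update_self j t l
    have exk : Function.update l j t k = l k := Function.update_of_ne (Ne.symm hjk) t l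
    have hx : ∀ m, 0 < Function.update l j t m := by
      intro m
      rcases eq_or_ne m j with rfl | hm
      · rw [exj]; exact ht1
      · rw [Function.update_of_ne hm]; exact hl m
    have htx : ∀ m n p : Fin 3, m ≠ n → n ≠ p → m ≠ p →
        Function.update l j t m < Function.update l j t n + Function.update l j t p := by
      intro m n p hmn hnp hmp
      rcases fin3_perm i j k m n p hij hjk hik hmn hnp hmp with
        ⟨rfl, rfl, rfl⟩ | ⟨rfl, rfl, rfl⟩ | ⟨rfl, rfl, rfl⟩ | ⟨rfl, rfl, rfl⟩ |
        ⟨rfl, rfl, rfl⟩ | ⟨rfl, rfl, rfl⟩ <;>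
        simp only [exi, exj, exk] <;> linarith
    rw [key _ hx htx, exi, exj, exk]
  -- derivative in the i-th variable
  have hF0 : HasDerivAt (fun t : ℝ => (l j ^ 2 + l k ^ 2 - t ^ 2) / (2 * l j * l k))
      (-(2 * l i) / (2 * l j * l k)) (l i) := by
    have h : HasDerivAt (fun t : ℝ => t ^ 2) (2 * l i) (l i) := by
      simpa using hasDerivAt_pow 2 (l i)
    exact (h.const_sub (l j ^ 2 + l k ^ 2)).div_const (2 * l j * l k)
  have hFc := (Real.hasDerivAt_arccos hc1 hc2).comp (l i) hF0
  have hd_eq : d = -(1 / Real.sqrt (1 - ((l j ^ 2 + l k ^ 2 - l i ^ 2) /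
      (2 * l j * l k)) ^ 2)) * (-(2 * l i) / (2 * l j * l k)) :=
    hd.unique (hFc.congr_of_eventuallyEq hnbd_i)
  -- derivative in the j-th variable
  have hG0 : HasDerivAt (fun t : ℝ => (t ^ 2 + l k ^ 2 - l i ^ 2) / (2 * t * l k))
      ((2 * l j * (2 * l j * l k) - (l j ^ 2 + l k ^ 2 - l i ^ 2) * (2 * l k)) /
        (2 * l j * l k) ^ 2) (l j) := by
    have hnum : HasDerivAt (fun t : ℝ => t ^ 2 + l k ^ 2 - l i ^ 2) (2 * l j) (l j) := by
      simpa using ((hasDerivAt_pow 2 (l j)).add_const (l k ^ 2)).sub_const (l i ^ 2)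
    have hden : HasDerivAt (fun t : ℝ => 2 * t * l k) (2 * l k) (l j) := by
      simpa using ((hasDerivAt_id (l j)).const_mul 2).mul_const (l k)
    exact hnum.div hden (show (2 : ℝ) * l j * l k ≠ 0 by positivity)
  have hGc := (Real.hasDerivAt_arccos hc1 hc2).comp (l j) hG0
  have hval : -d * Real.cos (a l k) =
      -(1 / Real.sqrt (1 - ((l j ^ 2 + l k ^ 2 - l i ^ 2) / (2 * l j * l k)) ^ 2)) *
        ((2 * l j * (2 * l j * l k) - (l j ^ 2 + l k ^ 2 - l i ^ 2) * (2 * l k)) /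
          (2 * l j * l k) ^ 2) := by
    have hs := ne_of_gt hs0
    rw [hd_eq, hcosk]
    generalize Real.sqrt (1 - ((l j ^ 2 + l k ^ 2 - l i ^ 2) / (2 * l j * l k)) ^ 2) = s at hs ⊢
    field_simp
    ring
  rw [hval]
  exact hGc.congr_of_eventuallyEq hnbd_j
end

section
/- For a spherical triangle with angles a_i defined as functions of edge lengths (l1, l2, l3) by the spherical cosine law, one has ∂a_i/∂l_i = sin(l_i)/A, where A = sin(a_i)·sin(l_j)·sin(l_k) is the A-invariant ({i,j,k} = {1,2,3}). -/
open Real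

/-- For a spherical triangle with angles `a_i ∈ (0,π)` determined from the
edge lengths by the spherical cosine law, one has ∂a_i/∂l_i = sin(l_i)/A where
A = sin(a_i)·sin(l_j)·sin(l_k) is the A-invariant. -/
theorem spherical_deriv_angle_self
    (a : (Fin 3 → ℝ) → Fin 3 → ℝ)
    (ha : ∀ x : Fin 3 → ℝ, (∀ i, x i ∈ Set.Ioo 0 π) →
      (∀ i j k : Fin 3, i ≠ j → j ≠ k → i ≠ k → x i < x j + x k) →
      (x 0 + x 1 + x 2 < 2 * π) →
      ∀ i j k : Fin 3, i ≠ j → j ≠ k → i ≠ k →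
        a x i ∈ Set.Ioo 0 π ∧
        Real.cos (x i) = Real.cos (x j) * Real.cos (x k) +
          Real.sin (x j) * Real.sin (x k) * Real.cos (a x i))
    (l : Fin 3 → ℝ) (hl : ∀ i, l i ∈ Set.Ioo 0 π)
    (htri : ∀ i j k : Fin 3, i ≠ j → j ≠ k → i ≠ k → l i < l j + l k)
    (hsum : l 0 + l 1 + l 2 < 2 * π)
    (i j k : Fin 3) (hij : i ≠ j) (hjk : j ≠ k) (hik : i ≠ k) :
    HasDerivAt (fun t => a (Function.update l i t) i)
      (Real.sin (l i) / (Real.sin (a l i) * Real.sin (l j) * Real.sin (l k))) (l i) := by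
  set C := Real.cos (l j) * Real.cos (l k) with hC
  set S := Real.sin (l j) * Real.sin (l k) with hS
  have hSj : 0 < Real.sin (l j) := Real.sin_pos_of_pos_of_lt_pi (hl j).1 (hl j).2
  have hSk : 0 < Real.sin (l k) := Real.sin_pos_of_pos_of_lt_pi (hl k).1 (hl k).2
  have hSpos : 0 < S := mul_pos hSj hSk
  -- continuity of coordinates of the updated point
  have hcont : ∀ m : Fin 3, ContinuousAt (fun t => Function.update l i t m) (l i) := by
    intro m
    simp only [Function.update_apply]
    by_cases hm : m = i
    · simp [hm]; exact continuousAt_id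
    · simp [hm]; exact continuousAt_const
  have hself : ∀ m, Function.update l i (l i) m = l m := by
    intro m; rw [Function.update_eq_self]
  -- eventually, the updated point stays in the admissible region
  have h1 : ∀ᶠ t in nhds (l i), ∀ m, Function.update l i t m ∈ Set.Ioo 0 π := by
    rw [Filter.eventually_all]
    intro m
    exact (hcont m).eventually_mem (isOpen_Ioo.mem_nhds (by rw [hself m]; exact hl m))
  have h2 : ∀ᶠ t in nhds (l i), ∀ i' j' k' : Fin 3, i' ≠ j' → j' ≠ k' → i' ≠ k' →
      Function.update l i t i' < Function.update l i t j' + Function.update l i t k' := by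
    rw [Filter.eventually_all]; intro i'
    rw [Filter.eventually_all]; intro j'
    rw [Filter.eventually_all]; intro k'
    by_cases hd : i' ≠ j' ∧ j' ≠ k' ∧ i' ≠ k'
    · have : ContinuousAt (fun t => Function.update l i t j' + Function.update l i t k'
          - Function.update l i t i') (l i) := ((hcont j').add (hcont k')).sub (hcont i')
      have hpos : (0:ℝ) < Function.update l i (l i) j' + Function.update l i (l i) k'
          - Function.update l i (l i) i' := by
        rw [hself, hself, hself]
        have := htri i' j' k' hd.1 hd.2.1 hd.2.2
        linarith
      have := this.eventually_mem (isOpen_Ioi.mem_nhds hpos)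
      filter_upwards [this] with t ht _ _ _
      have : (0:ℝ) < _ := ht
      linarith
    · filter_upwards with t h1' h2' h3'
      exact absurd ⟨h1', h2', h3'⟩ hd
  have h3 : ∀ᶠ t in nhds (l i),
      Function.update l i t 0 + Function.update l i t 1 + Function.update l i t 2 < 2 * π := by
    have : ContinuousAt (fun t => Function.update l i t 0 + Function.update l i t 1
        + Function.update l i t 2) (l i) := ((hcont 0).add (hcont 1)).add (hcont 2)
    have hmem : Function.update l i (l i) 0 + Function.update l i (l i) 1
        + Function.update l i (l i) 2 < 2 * π := by rw [hself, hself, hself]; exact hsum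
    exact this.eventually_mem (isOpen_Iio.mem_nhds hmem)
  -- key: on the region, a x i = arccos ((cos (x i) - C)/S)
  have key : ∀ t : ℝ, (∀ m, Function.update l i t m ∈ Set.Ioo 0 π) →
      (∀ i' j' k' : Fin 3, i' ≠ j' → j' ≠ k' → i' ≠ k' →
        Function.update l i t i' < Function.update l i t j' + Function.update l i t k') →
      (Function.update l i t 0 + Function.update l i t 1 + Function.update l i t 2 < 2 * π) →
      a (Function.update l i t) i = Real.arccos ((Real.cos t - C) / S) := by
    intro t ht1 ht2 ht3
    obtain ⟨hmem, heq⟩ := ha _ ht1 ht2 ht3 i j k hij hjk hik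
    rw [Function.update_self, Function.update_of_ne (Ne.symm hij),
      Function.update_of_ne (Ne.symm hik)] at heq
    have : (Real.cos t - C) / S = Real.cos (a (Function.update l i t) i) := by
      rw [heq]; field_simp [hC, hS]; rw [hC, hS]; ring
    rw [this, Real.arccos_cos hmem.1.le hmem.2.le]
  -- the value at l i
  obtain ⟨hmem0, heq0⟩ := ha l hl htri hsum i j k hij hjk hik
  have hu0 : (Real.cos (l i) - C) / S = Real.cos (a l i) := by
    rw [heq0]; field_simp [hC, hS]; rw [hC, hS]; ring
  set u0 := (Real.cos (l i) - C) / S with hu0def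
  have hsina : 0 < Real.sin (a l i) := Real.sin_pos_of_pos_of_lt_pi hmem0.1 hmem0.2
  have husq : u0 ^ 2 < 1 := by
    rw [hu0]
    have h := Real.sin_sq_add_cos_sq (a l i)
    nlinarith
  have hne1 : u0 ≠ -1 := by nlinarith
  have hne2 : u0 ≠ 1 := by nlinarith
  have hroot : Real.sqrt (1 - u0 ^ 2) = Real.sin (a l i) := by
    rw [hu0, show (1 : ℝ) - Real.cos (a l i) ^ 2 = Real.sin (a l i) ^ 2 by
      have := Real.sin_sq_add_cos_sq (a l i); linarith]
    exact Real.sqrt_sq hsina.le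
  have hrootpos : 0 < Real.sqrt (1 - u0 ^ 2) := by rw [hroot]; exact hsina
  -- derivative of the explicit function
  have hinner : HasDerivAt (fun t => (Real.cos t - C) / S) (-Real.sin (l i) / S) (l i) := by
    simpa [neg_div] using ((Real.hasDerivAt_cos (l i)).sub_const C).div_const S
  have hg : HasDerivAt (fun t => Real.arccos ((Real.cos t - C) / S))
      ((-(1 / Real.sqrt (1 - u0 ^ 2))) * (-Real.sin (l i) / S)) (l i) :=
    by have := (Real.hasDerivAt_arccos hne1 hne2).comp (l i) hinner; exact this
  have hD : (-(1 / Real.sqrt (1 - u0 ^ 2))) * (-Real.sin (l i) / S)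
      = Real.sin (l i) / (Real.sin (a l i) * Real.sin (l j) * Real.sin (l k)) := by
    rw [hroot, hS]
    field_simp
  rw [← hD]
  refine hg.congr_of_eventuallyEq ?_
  filter_upwards [h1, h2, h3] with t ht1 ht2 ht3
  exact key t ht1 ht2 ht3
end

section
/- For a spherical triangle with angles a_i defined as functions of edge lengths via the spherical cosine law, one has ∂a_i/∂l_j = −(∂a_i/∂l_i)·cos(a_k), where {i,j,k} = {1,2,3}. -/
open Real

/-- For a spherical triangle with angles `a_i ∈ (0,π)` determined from the
edge lengths by the spherical cosine law, one has ∂a_i/∂l_j = −(∂a_i/∂l_i)·cos(a_k). -/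
theorem spherical_deriv_angle_other
    (a : (Fin 3 → ℝ) → Fin 3 → ℝ)
    (ha : ∀ x : Fin 3 → ℝ, (∀ i, x i ∈ Set.Ioo 0 π) →
      (∀ i j k : Fin 3, i ≠ j → j ≠ k → i ≠ k → x i < x j + x k) →
      (x 0 + x 1 + x 2 < 2 * π) →
      ∀ i j k : Fin 3, i ≠ j → j ≠ k → i ≠ k →
        a x i ∈ Set.Ioo 0 π ∧
        Real.cos (x i) = Real.cos (x j) * Real.cos (x k) +
          Real.sin (x j) * Real.sin (x k) * Real.cos (a x i))
    (l : Fin 3 → ℝ) (hl : ∀ i, l i ∈ Set.Ioo 0 π)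
    (htri : ∀ i j k : Fin 3, i ≠ j → j ≠ k → i ≠ k → l i < l j + l k)
    (hsum : l 0 + l 1 + l 2 < 2 * π)
    (i j k : Fin 3) (hij : i ≠ j) (hjk : j ≠ k) (hik : i ≠ k)
    (d : ℝ) (hd : HasDerivAt (fun t => a (Function.update l i t) i) d (l i)) :
    HasDerivAt (fun t => a (Function.update l j t) i)
      (-d * Real.cos (a l k)) (l j) := by
  have hsin : ∀ r : Fin 3, 0 < Real.sin (l r) :=
    fun r => Real.sin_pos_of_pos_of_lt_pi (hl r).1 (hl r).2
  obtain ⟨hAi, hLawi⟩ := ha l hl htri hsum i j k hij hjk hik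
  obtain ⟨hAk, hLawk⟩ := ha l hl htri hsum k i j hik.symm hij hjk.symm
  have hsinAi : 0 < Real.sin (a l i) := Real.sin_pos_of_pos_of_lt_pi hAi.1 hAi.2
  have hpyth := Real.sin_sq_add_cos_sq (a l i)
  have hC2 : Real.cos (a l i) ^ 2 < 1 := by nlinarith
  have hC1 : Real.cos (a l i) ≠ 1 := by nlinarith
  have hCm1 : Real.cos (a l i) ≠ -1 := by nlinarith
  have hsqrt : Real.sqrt (1 - Real.cos (a l i) ^ 2) = Real.sin (a l i) := by
    rw [show 1 - Real.cos (a l i) ^ 2 = Real.sin (a l i) ^ 2 by nlinarith,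
      Real.sqrt_sq hsinAi.le]
  -- continuity of coordinates of the update
  have hcont : ∀ (m r : Fin 3), Continuous (fun t : ℝ => Function.update l m t r) := by
    intro m r
    rcases eq_or_ne r m with h | h
    · subst h; simpa using continuous_id'
    · simpa [Function.update_of_ne h] using (continuous_const : Continuous fun _ : ℝ => l r)
  -- eventual identification of `a` with an explicit arccos formula
  have key : ∀ m : Fin 3, ∀ᶠ t in nhds (l m),
      a (Function.update l m t) i = Real.arccos
        ((Real.cos (Function.update l m t i) -
            Real.cos (Function.update l m t j) * Real.cos (Function.update l m t k)) /
          (Real.sin (Function.update l m t j) * Real.sin (Function.update l m t k))) := by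
    intro m
    have hmem : ∀ᶠ t in nhds (l m), ∀ r, Function.update l m t r ∈ Set.Ioo 0 π := by
      have h1 : ∀ᶠ t in nhds (l m), t ∈ Set.Ioo 0 π := isOpen_Ioo.eventually_mem (hl m)
      filter_upwards [h1] with t ht r
      rcases eq_or_ne r m with h | h
      · subst h; simpa using ht
      · simpa [Function.update_of_ne h] using hl r
    have htr1 : ∀ p q r : Fin 3, p ≠ q → q ≠ r → p ≠ r → ∀ᶠ t in nhds (l m),
        Function.update l m t p < Function.update l m t q + Function.update l m t r := by
      intro p q r hpq hqr hpr
      refine (hcont m p).continuousAt.eventually_lt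
        (((hcont m q).add (hcont m r)).continuousAt) ?_
      simpa using htri p q r hpq hqr hpr
    have htr : ∀ᶠ t in nhds (l m), ∀ p q r : Fin 3, p ≠ q → q ≠ r → p ≠ r →
        Function.update l m t p < Function.update l m t q + Function.update l m t r := by
      filter_upwards [htr1 0 1 2 (by decide) (by decide) (by decide),
        htr1 0 2 1 (by decide) (by decide) (by decide),
        htr1 1 0 2 (by decide) (by decide) (by decide),
        htr1 1 2 0 (by decide) (by decide) (by decide),
        htr1 2 0 1 (by decide) (by decide) (by decide),
        htr1 2 1 0 (by decide) (by decide) (by decide)] with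
        t h1 h2 h3 h4 h5 h6 p q r hpq hqr hpr
      fin_cases p <;> fin_cases q <;> fin_cases r <;>
        first
          | exact absurd rfl hpq | exact absurd rfl hqr | exact absurd rfl hpr
          | exact h1 | exact h2 | exact h3 | exact h4 | exact h5 | exact h6
    have hsumE : ∀ᶠ t in nhds (l m),
        Function.update l m t 0 + Function.update l m t 1 + Function.update l m t 2 < 2 * π := by
      refine (((hcont m 0).add (hcont m 1)).add (hcont m 2)).continuousAt.eventually_lt
        continuousAt_const ?_
      simpa using hsum
    filter_upwards [hmem, htr, hsumE] with t h1 h2 h3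
    obtain ⟨hA, hLaw⟩ := ha _ h1 h2 h3 i j k hij hjk hik
    have hsj : 0 < Real.sin (Function.update l m t j) :=
      Real.sin_pos_of_pos_of_lt_pi (h1 j).1 (h1 j).2
    have hsk : 0 < Real.sin (Function.update l m t k) :=
      Real.sin_pos_of_pos_of_lt_pi (h1 k).1 (h1 k).2
    have : (Real.cos (Function.update l m t i) -
          Real.cos (Function.update l m t j) * Real.cos (Function.update l m t k)) /
        (Real.sin (Function.update l m t j) * Real.sin (Function.update l m t k)) =
        Real.cos (a (Function.update l m t) i) := by
      rw [div_eq_iff (mul_pos hsj hsk).ne']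
      linear_combination hLaw
    rw [this, Real.arccos_cos hA.1.le hA.2.le]
  -- the common value of the quotient at the base point
  have hgval : (Real.cos (l i) - Real.cos (l j) * Real.cos (l k)) /
      (Real.sin (l j) * Real.sin (l k)) = Real.cos (a l i) := by
    rw [div_eq_iff (mul_pos (hsin j) (hsin k)).ne']
    linear_combination hLawi
  have harc : HasDerivAt Real.arccos
      (-(1 / Real.sqrt (1 - Real.cos (a l i) ^ 2))) (Real.cos (a l i)) :=
    Real.hasDerivAt_arccos hCm1 hC1
  -- derivative in the i-th variable
  have keyi : (fun t => a (Function.update l i t) i) =ᶠ[nhds (l i)]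
      (fun t => Real.arccos ((Real.cos t - Real.cos (l j) * Real.cos (l k)) /
        (Real.sin (l j) * Real.sin (l k)))) := by
    filter_upwards [key i] with t ht
    simpa [Function.update_self, Function.update_of_ne hij.symm,
      Function.update_of_ne hik.symm] using ht
  have hf : HasDerivAt (fun t => (Real.cos t - Real.cos (l j) * Real.cos (l k)) /
      (Real.sin (l j) * Real.sin (l k)))
      (-Real.sin (l i) / (Real.sin (l j) * Real.sin (l k))) (l i) :=
    ((Real.hasDerivAt_cos (l i)).sub_const _).div_const _
  have hDi : HasDerivAt (fun t => a (Function.update l i t) i)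
      (-(1 / Real.sqrt (1 - Real.cos (a l i) ^ 2)) *
        (-Real.sin (l i) / (Real.sin (l j) * Real.sin (l k)))) (l i) := by
    refine HasDerivAt.congr_of_eventuallyEq ?_ keyi
    have harc' : HasDerivAt Real.arccos
        (-(1 / Real.sqrt (1 - Real.cos (a l i) ^ 2)))
        ((Real.cos (l i) - Real.cos (l j) * Real.cos (l k)) /
          (Real.sin (l j) * Real.sin (l k))) := by
      rw [hgval]; exact harc
    have := harc'.comp (l i) hf
    exact this
  have hd1 : d = -(1 / Real.sqrt (1 - Real.cos (a l i) ^ 2)) *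
      (-Real.sin (l i) / (Real.sin (l j) * Real.sin (l k))) := hd.unique hDi
  -- derivative in the j-th variable
  have keyj : (fun t => a (Function.update l j t) i) =ᶠ[nhds (l j)]
      (fun t => Real.arccos ((Real.cos (l i) - Real.cos t * Real.cos (l k)) /
        (Real.sin t * Real.sin (l k)))) := by
    filter_upwards [key j] with t ht
    simpa [Function.update_self, Function.update_of_ne hij,
      Function.update_of_ne hjk.symm] using ht
  have hnum : HasDerivAt (fun t => Real.cos (l i) - Real.cos t * Real.cos (l k))
      (Real.sin (l j) * Real.cos (l k)) (l j) := by
    have := ((Real.hasDerivAt_cos (l j)).mul_const (Real.cos (l k))).const_sub (Real.cos (l i))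
    exact this.congr_deriv (by ring)
  have hden : HasDerivAt (fun t => Real.sin t * Real.sin (l k))
      (Real.cos (l j) * Real.sin (l k)) (l j) :=
    (Real.hasDerivAt_sin (l j)).mul_const _
  have hden0 : Real.sin (l j) * Real.sin (l k) ≠ 0 :=
    (mul_pos (hsin j) (hsin k)).ne'
  have hg : HasDerivAt (fun t => (Real.cos (l i) - Real.cos t * Real.cos (l k)) /
      (Real.sin t * Real.sin (l k)))
      ((Real.sin (l j) * Real.cos (l k) * (Real.sin (l j) * Real.sin (l k)) -
        (Real.cos (l i) - Real.cos (l j) * Real.cos (l k)) *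
          (Real.cos (l j) * Real.sin (l k))) /
        (Real.sin (l j) * Real.sin (l k)) ^ 2) (l j) :=
    hnum.div hden hden0
  have hDj : HasDerivAt (fun t => a (Function.update l j t) i)
      (-(1 / Real.sqrt (1 - Real.cos (a l i) ^ 2)) *
        ((Real.sin (l j) * Real.cos (l k) * (Real.sin (l j) * Real.sin (l k)) -
          (Real.cos (l i) - Real.cos (l j) * Real.cos (l k)) *
            (Real.cos (l j) * Real.sin (l k))) /
          (Real.sin (l j) * Real.sin (l k)) ^ 2)) (l j) := by
    refine HasDerivAt.congr_of_eventuallyEq ?_ keyj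
    have harc' : HasDerivAt Real.arccos
        (-(1 / Real.sqrt (1 - Real.cos (a l i) ^ 2)))
        ((Real.cos (l i) - Real.cos (l j) * Real.cos (l k)) /
          (Real.sin (l j) * Real.sin (l k))) := by
      rw [hgval]; exact harc
    have := harc'.comp (l j) hg
    exact this
  have heq : -d * Real.cos (a l k) =
      -(1 / Real.sqrt (1 - Real.cos (a l i) ^ 2)) *
        ((Real.sin (l j) * Real.cos (l k) * (Real.sin (l j) * Real.sin (l k)) -
          (Real.cos (l i) - Real.cos (l j) * Real.cos (l k)) *
            (Real.cos (l j) * Real.sin (l k))) /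
          (Real.sin (l j) * Real.sin (l k)) ^ 2) := by
    rw [hd1, hsqrt]
    have hP := Real.sin_sq_add_cos_sq (l j)
    have hsj := (hsin j).ne'
    have hsk := (hsin k).ne'
    have hsA := hsinAi.ne'
    field_simp
    linear_combination hLawk + Real.cos (l k) * hP
  rw [heq]
  exact hDj
end

section
/- For a hyperbolic triangle with angles a_i defined as functions of the edge lengths (l1, l2, l3) by the hyperbolic cosine law, one has ∂a_i/∂l_i = sinh(l_i)/A where A = sin(a_i)·sinh(l_j)·sinh(l_k), and ∂a_i/∂l_j = −(∂a_i/∂l_i)·cos(a_k), for {i,j,k} = {1,2,3}. -/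
open Real

lemma update_tri_aux (l : Fin 3 → ℝ) (hl : ∀ m, 0 < l m)
    (i j k : Fin 3) (hij : i ≠ j) (hjk : j ≠ k) (hik : i ≠ k)
    (t : ℝ) (ht : 0 < t) (h1 : t < l j + l k) (h2 : l j < t + l k) (h3 : l k < t + l j) :
    (∀ m, 0 < Function.update l i t m) ∧
    (∀ p q r : Fin 3, p ≠ q → q ≠ r → p ≠ r →
      Function.update l i t p < Function.update l i t q + Function.update l i t r) := by
  have hmem : ∀ m : Fin 3, m = i ∨ m = j ∨ m = k := by
    intro m
    have hi := i.isLt; have hj := j.isLt; have hk := k.isLt; have hm := m.isLt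
    have d1 : i.val ≠ j.val := fun h => hij (Fin.ext h)
    have d2 : j.val ≠ k.val := fun h => hjk (Fin.ext h)
    have d3 : i.val ≠ k.val := fun h => hik (Fin.ext h)
    have : m.val = i.val ∨ m.val = j.val ∨ m.val = k.val := by omega
    rcases this with h|h|h
    · exact Or.inl (Fin.ext h)
    · exact Or.inr (Or.inl (Fin.ext h))
    · exact Or.inr (Or.inr (Fin.ext h))
  constructor
  · intro m
    rcases eq_or_ne m i with rfl|hm
    · simpa using ht
    · rw [Function.update_of_ne hm]; exact hl m
  · intro p q r hpq hqr hpr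
    rcases hmem p with rfl|rfl|rfl <;> rcases hmem q with rfl|rfl|rfl <;>
      rcases hmem r with rfl|rfl|rfl <;>
      simp_all [Function.update_apply, hij, hjk, hik, hij.symm, hjk.symm, hik.symm] <;>
      linarith

lemma angle_eq_arccos
    (a : (Fin 3 → ℝ) → Fin 3 → ℝ)
    (ha : ∀ x : Fin 3 → ℝ, (∀ i, 0 < x i) →
      (∀ i j k : Fin 3, i ≠ j → j ≠ k → i ≠ k → x i < x j + x k) →
      ∀ i j k : Fin 3, i ≠ j → j ≠ k → i ≠ k →
        a x i ∈ Set.Ioo 0 π ∧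
        Real.cosh (x i) = Real.cosh (x j) * Real.cosh (x k) -
          Real.sinh (x j) * Real.sinh (x k) * Real.cos (a x i))
    (x : Fin 3 → ℝ) (hx : ∀ m, 0 < x m)
    (hxtri : ∀ p q r : Fin 3, p ≠ q → q ≠ r → p ≠ r → x p < x q + x r)
    (i j k : Fin 3) (hij : i ≠ j) (hjk : j ≠ k) (hik : i ≠ k) :
    a x i = Real.arccos ((Real.cosh (x j) * Real.cosh (x k) - Real.cosh (x i)) /
      (Real.sinh (x j) * Real.sinh (x k))) := by
  obtain ⟨⟨h0, hπ⟩, hc⟩ := ha x hx hxtri i j k hij hjk hik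
  have hsj : 0 < Real.sinh (x j) := Real.sinh_pos_iff.2 (hx j)
  have hsk : 0 < Real.sinh (x k) := Real.sinh_pos_iff.2 (hx k)
  have hS : Real.sinh (x j) * Real.sinh (x k) ≠ 0 := by positivity
  rw [← Real.arccos_cos h0.le hπ.le]
  congr 1
  field_simp
  linarith

/-- For a hyperbolic triangle with angles `a_i ∈ (0,π)` determined from the
edge lengths by the hyperbolic cosine law, one has ∂a_i/∂l_i = sinh(l_i)/A where
A = sin(a_i)·sinh(l_j)·sinh(l_k), and ∂a_i/∂l_j = −(∂a_i/∂l_i)·cos(a_k). -/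
theorem hyperbolic_deriv_angle
    (a : (Fin 3 → ℝ) → Fin 3 → ℝ)
    (ha : ∀ x : Fin 3 → ℝ, (∀ i, 0 < x i) →
      (∀ i j k : Fin 3, i ≠ j → j ≠ k → i ≠ k → x i < x j + x k) →
      ∀ i j k : Fin 3, i ≠ j → j ≠ k → i ≠ k →
        a x i ∈ Set.Ioo 0 π ∧
        Real.cosh (x i) = Real.cosh (x j) * Real.cosh (x k) -
          Real.sinh (x j) * Real.sinh (x k) * Real.cos (a x i))
    (l : Fin 3 → ℝ) (hl : ∀ i, 0 < l i)
    (htri : ∀ i j k : Fin 3, i ≠ j → j ≠ k → i ≠ k → l i < l j + l k)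
    (i j k : Fin 3) (hij : i ≠ j) (hjk : j ≠ k) (hik : i ≠ k) :
    HasDerivAt (fun t => a (Function.update l i t) i)
      (Real.sinh (l i) / (Real.sin (a l i) * Real.sinh (l j) * Real.sinh (l k))) (l i) ∧
    HasDerivAt (fun t => a (Function.update l j t) i)
      (-(Real.sinh (l i) / (Real.sin (a l i) * Real.sinh (l j) * Real.sinh (l k)))
        * Real.cos (a l k)) (l j) := by
  have hsj : 0 < Real.sinh (l j) := Real.sinh_pos_iff.2 (hl j)
  have hsk : 0 < Real.sinh (l k) := Real.sinh_pos_iff.2 (hl k)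
  obtain ⟨⟨h0, hπ⟩, hc⟩ := ha l hl htri i j k hij hjk hik
  have hsin : 0 < Real.sin (a l i) := Real.sin_pos_of_pos_of_lt_pi h0 hπ
  have hpyth := Real.sin_sq_add_cos_sq (a l i)
  have hsin' : Real.sin (a l i) ≠ 0 := hsin.ne'
  have hsj' : Real.sinh (l j) ≠ 0 := hsj.ne'
  have hsk' : Real.sinh (l k) ≠ 0 := hsk.ne'
  -- the common value cos (a l i)
  have hcv : (Real.cosh (l j) * Real.cosh (l k) - Real.cosh (l i)) /
      (Real.sinh (l j) * Real.sinh (l k)) = Real.cos (a l i) := by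
    field_simp
    linarith
  have hne1 : Real.cos (a l i) ≠ 1 := by nlinarith
  have hnem1 : Real.cos (a l i) ≠ -1 := by nlinarith
  have hsqrt : Real.sqrt (1 - Real.cos (a l i) ^ 2) = Real.sin (a l i) := by
    rw [show 1 - Real.cos (a l i) ^ 2 = Real.sin (a l i) ^ 2 by nlinarith,
      Real.sqrt_sq hsin.le]
  constructor
  · -- ∂/∂ l i
    have hg : HasDerivAt (fun t => (Real.cosh (l j) * Real.cosh (l k) - Real.cosh t) /
        (Real.sinh (l j) * Real.sinh (l k))) ((0 - Real.sinh (l i)) /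
        (Real.sinh (l j) * Real.sinh (l k))) (l i) :=
      ((hasDerivAt_const _ _).sub (Real.hasDerivAt_cosh _)).div_const _
    have harccos : HasDerivAt Real.arccos (-(1 / Real.sqrt (1 - Real.cos (a l i) ^ 2)))
        ((fun t => (Real.cosh (l j) * Real.cosh (l k) - Real.cosh t) /
          (Real.sinh (l j) * Real.sinh (l k))) (l i)) := by
      simp only; rw [hcv]; exact Real.hasDerivAt_arccos hnem1 hne1
    have hcomp := harccos.comp (l i) hg
    rw [hsqrt] at hcomp
    have hval : -(1 / Real.sin (a l i)) * ((0 - Real.sinh (l i)) /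
        (Real.sinh (l j) * Real.sinh (l k))) =
        Real.sinh (l i) / (Real.sin (a l i) * Real.sinh (l j) * Real.sinh (l k)) := by
      rw [zero_sub]
      field_simp
    rw [hval] at hcomp
    apply hcomp.congr_of_eventuallyEq
    have hmem : l i ∈ Set.Ioo (max (l j - l k) (max (l k - l j) 0)) (l j + l k) := by
      constructor
      · have h2 := htri j i k hij.symm hik hjk
        have h3 := htri k i j hik.symm hij hjk.symm
        have := hl i
        simp only [max_lt_iff]
        exact ⟨by linarith, by linarith, this⟩
      · exact htri i j k hij hjk hik
    apply Filter.eventuallyEq_of_mem (isOpen_Ioo.mem_nhds hmem)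
    intro t ht
    obtain ⟨ht1, ht2⟩ := ht
    simp only [max_lt_iff] at ht1
    obtain ⟨hx, hxtri⟩ := update_tri_aux l hl i j k hij hjk hik t ht1.2.2
      ht2 (by linarith [ht1.1]) (by linarith [ht1.2.1])
    have := angle_eq_arccos a ha _ hx hxtri i j k hij hjk hik
    show a (Function.update l i t) i = _
    rw [this, Function.update_self, Function.update_of_ne hij.symm,
      Function.update_of_ne hik.symm]
    rfl
  · -- ∂/∂ l j
    have hck := (ha l hl htri k i j hik.symm hij hjk.symm).2
    have hG : HasDerivAt (fun t => (Real.cosh t * Real.cosh (l k) - Real.cosh (l i)) /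
        (Real.sinh t * Real.sinh (l k)))
        ((Real.sinh (l j) * Real.cosh (l k) * (Real.sinh (l j) * Real.sinh (l k)) -
          (Real.cosh (l j) * Real.cosh (l k) - Real.cosh (l i)) *
            (Real.cosh (l j) * Real.sinh (l k))) /
          (Real.sinh (l j) * Real.sinh (l k)) ^ 2) (l j) := by
      exact (((Real.hasDerivAt_cosh _).mul_const _).sub_const _).div
        ((Real.hasDerivAt_sinh _).mul_const _) (by positivity)
    have harccos : HasDerivAt Real.arccos (-(1 / Real.sqrt (1 - Real.cos (a l i) ^ 2)))
        ((fun t => (Real.cosh t * Real.cosh (l k) - Real.cosh (l i)) /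
          (Real.sinh t * Real.sinh (l k))) (l j)) := by
      simp only
      rw [show (Real.cosh (l j) * Real.cosh (l k) - Real.cosh (l i)) /
        (Real.sinh (l j) * Real.sinh (l k)) = Real.cos (a l i) from hcv]
      exact Real.hasDerivAt_arccos hnem1 hne1
    have hcomp := harccos.comp (l j) hG
    rw [hsqrt] at hcomp
    have hval : -(1 / Real.sin (a l i)) *
        ((Real.sinh (l j) * Real.cosh (l k) * (Real.sinh (l j) * Real.sinh (l k)) -
          (Real.cosh (l j) * Real.cosh (l k) - Real.cosh (l i)) *
            (Real.cosh (l j) * Real.sinh (l k))) /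
          (Real.sinh (l j) * Real.sinh (l k)) ^ 2) =
        -(Real.sinh (l i) / (Real.sin (a l i) * Real.sinh (l j) * Real.sinh (l k)))
          * Real.cos (a l k) := by
      have hid := Real.cosh_sq_sub_sinh_sq (l j)
      field_simp
      linear_combination (
          Real.cosh (l k)) * hid +
        hck
    rw [hval] at hcomp
    apply hcomp.congr_of_eventuallyEq
    have hmem : l j ∈ Set.Ioo (max (l i - l k) (max (l k - l i) 0)) (l i + l k) := by
      constructor
      · have h2 := htri i j k hij hjk hik
        have h3 := htri k j i hjk.symm hij.symm hik.symm
        have := hl j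
        simp only [max_lt_iff]
        exact ⟨by linarith, by linarith, this⟩
      · exact htri j i k hij.symm hik hjk
    apply Filter.eventuallyEq_of_mem (isOpen_Ioo.mem_nhds hmem)
    intro t ht
    obtain ⟨ht1, ht2⟩ := ht
    simp only [max_lt_iff] at ht1
    obtain ⟨hx, hxtri⟩ := update_tri_aux l hl j i k hij.symm hik hjk t ht1.2.2
      ht2 (by linarith [ht1.1]) (by linarith [ht1.2.1])
    have := angle_eq_arccos a ha _ hx hxtri i j k hij hjk hik
    show a (Function.update l j t) i = _
    rw [this, Function.update_self, Function.update_of_ne hij,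
      Function.update_of_ne hjk.symm]
    rfl
end

section
/- With notation as for a Euclidean tetrahedron and P^{ij}_{rs} = (1/(sin a_{ij} sin a_{rs})) · ∂a_{ij}/∂x_{rs}: assuming P^{ij}_{rs} = P^{rs}_{ij} for all pairs and P^{ij}_{ik} = −P^{ij}_{kl} cos(a_{jk}) for pairwise distinct i,j,k,l, it follows that P^{ij}_{rs} = P^{i'j'}_{r's'} whenever {i,j} ≠ {r,s}, where {a',b'} denotes the complement of {a,b} in {1,2,3,4}. -/
open Real

private lemma pair_eq_cases : ∀ x y u v : Fin 4, ({x,y} : Finset (Fin 4)) = {u,v} →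
    (x = u ∧ y = v) ∨ (x = v ∧ y = u) := by decide

private lemma mem_of_compl : ∀ x j s i' j' : Fin 4, x ≠ j → s ≠ x → s ≠ j →
    ({i',j'} : Finset (Fin 4)) = ({x,j} : Finset (Fin 4))ᶜ → s = i' ∨ s = j' := by decide

private lemma fourth_unique : ∀ x j s t₁ t₂ : Fin 4, x ≠ j → x ≠ s → j ≠ s →
    t₁ ≠ x → t₁ ≠ j → t₁ ≠ s → t₂ ≠ x → t₂ ≠ j → t₂ ≠ s → t₁ = t₂ := by decide

private lemma compl_of_disj : ∀ i j r s : Fin 4, i ≠ j → r ≠ s → r ≠ i → r ≠ j → s ≠ i → s ≠ j →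
    ({r,s} : Finset (Fin 4)) = ({i,j} : Finset (Fin 4))ᶜ := by decide

private lemma compl_facts : ∀ i j i' j' : Fin 4, i ≠ j →
    ({i',j'} : Finset (Fin 4)) = ({i,j} : Finset (Fin 4))ᶜ →
    i' ≠ j' ∧ i' ≠ i ∧ i' ≠ j ∧ j' ≠ i ∧ j' ≠ j := by decide

private lemma Pinv (P : Fin 4 → Fin 4 → Fin 4 → Fin 4 → ℝ)
    (hP_pair : ∀ p q r s, P p q r s = P q p r s ∧ P p q r s = P p q s r) :
    ∀ p q u v p₁ q₁ u₁ v₁ : Fin 4,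
      (p = p₁ ∧ q = q₁ ∨ p = q₁ ∧ q = p₁) → (u = u₁ ∧ v = v₁ ∨ u = v₁ ∧ v = u₁) →
      P p q u v = P p₁ q₁ u₁ v₁ := by
  have h1 : ∀ p q u v, P p q u v = P q p u v := fun p q u v => (hP_pair p q u v).1
  have h2 : ∀ p q u v, P p q u v = P p q v u := fun p q u v => (hP_pair p q u v).2
  rintro p q u v p₁ q₁ u₁ v₁ (⟨rfl, rfl⟩ | ⟨rfl, rfl⟩) (⟨rfl, rfl⟩ | ⟨rfl, rfl⟩)
  · rfl
  · exact h2 _ _ _ _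
  · exact h1 _ _ _ _
  · rw [h1, h2]

/-- for quantities `P^{ij}_{rs}` indexed by unordered pairs of distinct
elements of {1,2,3,4}, the Schläfli symmetry (i) and the relation (iii) imply the
complementarity symmetry (v): `P^{ij}_{rs} = P^{i'j'}_{r's'}` whenever `{i,j} ≠ {r,s}`,
where `{a',b'}` is the complement of `{a,b}` in {1,2,3,4}. -/
theorem P_complement_symmetry
    (P : Fin 4 → Fin 4 → Fin 4 → Fin 4 → ℝ)
    (a : Fin 4 → Fin 4 → ℝ)
    (ha_symm : ∀ p q, a p q = a q p)
    (hP_pair : ∀ p q r s, P p q r s = P q p r s ∧ P p q r s = P p q s r)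
    (hschlaefli : ∀ p q r s, P p q r s = P r s p q)
    (hiii : ∀ i j k l : Fin 4, i ≠ j → i ≠ k → i ≠ l → j ≠ k → j ≠ l → k ≠ l →
      P i j i k = -(P i j k l) * Real.cos (a j k)) :
    ∀ i j r s i' j' r' s' : Fin 4, i ≠ j → r ≠ s →
      ({i, j} : Finset (Fin 4)) ≠ {r, s} →
      ({i', j'} : Finset (Fin 4)) = ({i, j} : Finset (Fin 4))ᶜ →
      ({r', s'} : Finset (Fin 4)) = ({r, s} : Finset (Fin 4))ᶜ →
      P i j r s = P i' j' r' s' := by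
  have hPinv := Pinv P hP_pair
  -- key algebraic lemma: for pairwise distinct x, j, s, t : P x j x s = P s t j t
  have key : ∀ x j s t : Fin 4, x ≠ j → x ≠ s → x ≠ t → j ≠ s → j ≠ t → s ≠ t →
      P x j x s = P s t j t := by
    intro x j s t hxj hxs hxt hjs hjt hst
    have e1 : P x j x s = -(P x j s t) * Real.cos (a j s) :=
      hiii x j s t hxj hxs hxt hjs hjt hst
    have e2 : P t s t j = -(P t s j x) * Real.cos (a s j) :=
      hiii t s j x (Ne.symm hst) (Ne.symm hjt) (Ne.symm hxt) (Ne.symm hjs) (Ne.symm hxs)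
        (Ne.symm hxj)
    have e3 : P s t j t = P t s t j := by
      rw [(hP_pair s t j t).1, (hP_pair t s j t).2]
    have e4 : P t s j x = P x j s t := by
      rw [hschlaefli t s j x]
      exact (hPinv j x t s x j s t (Or.inr ⟨rfl, rfl⟩) (Or.inr ⟨rfl, rfl⟩)).symm ▸ rfl
    rw [e1, e3, e2, e4, ha_symm s j]
  -- the shared-element case
  have shared : ∀ x j₀ s₀ i' j' r' s' : Fin 4, x ≠ j₀ → x ≠ s₀ → j₀ ≠ s₀ →
      ({i', j'} : Finset (Fin 4)) = ({x, j₀} : Finset (Fin 4))ᶜ →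
      ({r', s'} : Finset (Fin 4)) = ({x, s₀} : Finset (Fin 4))ᶜ →
      P x j₀ x s₀ = P i' j' r' s' := by
    intro x j₀ s₀ i' j' r' s' hxj hxs hjs hc1 hc2
    obtain ⟨hij', hi'x, hi'j, hj'x, hj'j⟩ := compl_facts x j₀ i' j' hxj hc1
    obtain ⟨hrs', hr'x, hr's, hs'x, hs's⟩ := compl_facts x s₀ r' s' hxs hc2
    rcases mem_of_compl x j₀ s₀ i' j' hxj (Ne.symm hxs) (Ne.symm hjs) hc1 with h1 | h1 <;>
      rcases mem_of_compl x s₀ j₀ r' s' hxs (Ne.symm hxj) hjs hc2 with h2 | h2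
    · -- s₀ = i', j₀ = r' ; fourth element : j' = s'
      have ht : j' = s' := fourth_unique x j₀ s₀ j' s' hxj hxs hjs hj'x hj'j
        (h1 ▸ Ne.symm hij') hs'x (h2 ▸ Ne.symm hrs') hs's
      rw [key x j₀ s₀ j' hxj hxs (Ne.symm hj'x) hjs (Ne.symm hj'j) (h1 ▸ hij')]
      exact hPinv s₀ j' j₀ j' i' j' r' s' (Or.inl ⟨h1, rfl⟩) (Or.inl ⟨h2, ht⟩)
    · -- s₀ = i', j₀ = s' ; fourth : j' = r'
      have ht : j' = r' := fourth_unique x j₀ s₀ j' r' hxj hxs hjs hj'x hj'j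
        (h1 ▸ Ne.symm hij') hr'x (h2 ▸ hrs') hr's
      rw [key x j₀ s₀ j' hxj hxs (Ne.symm hj'x) hjs (Ne.symm hj'j) (h1 ▸ hij')]
      exact hPinv s₀ j' j₀ j' i' j' r' s' (Or.inl ⟨h1, rfl⟩) (Or.inr ⟨h2, ht⟩)
    · -- s₀ = j', j₀ = r' ; fourth : i' = s'
      have ht : i' = s' := fourth_unique x j₀ s₀ i' s' hxj hxs hjs hi'x hi'j
        (h1 ▸ hij') hs'x (h2 ▸ Ne.symm hrs') hs's
      rw [key x j₀ s₀ i' hxj hxs (Ne.symm hi'x) hjs (Ne.symm hi'j) (h1 ▸ Ne.symm hij')]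
      exact hPinv s₀ i' j₀ i' i' j' r' s' (Or.inr ⟨h1, rfl⟩) (Or.inl ⟨h2, ht⟩)
    · -- s₀ = j', j₀ = s' ; fourth : i' = r'
      have ht : i' = r' := fourth_unique x j₀ s₀ i' r' hxj hxs hjs hi'x hi'j
        (h1 ▸ hij') hr'x (h2 ▸ hrs') hr's
      rw [key x j₀ s₀ i' hxj hxs (Ne.symm hi'x) hjs (Ne.symm hi'j) (h1 ▸ Ne.symm hij')]
      exact hPinv s₀ i' j₀ i' i' j' r' s' (Or.inr ⟨h1, rfl⟩) (Or.inr ⟨h2, ht⟩)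
  intro i j r s i' j' r' s' hij hrs hne hc1 hc2
  by_cases hri : r = i
  · subst hri
    have hjs : j ≠ s := fun h => hne (by rw [h])
    exact shared r j s i' j' r' s' hij hrs hjs hc1 hc2
  by_cases hrj : r = j
  · subst hrj
    have his : i ≠ s := fun h => hne (by rw [h, Finset.pair_comm])
    have step : P i r r s = P r i r s := (hP_pair i r r s).1
    rw [step]
    exact shared r i s i' j' r' s' (Ne.symm hij) hrs his (by rw [hc1, Finset.pair_comm i r]) hc2
  by_cases hsi : s = i
  · subst hsi
    have hjr : j ≠ r := fun h => hne (by rw [h, Finset.pair_comm r s])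
    have step : P s j r s = P s j s r := (hP_pair s j r s).2
    rw [step]
    exact shared s j r i' j' r' s' hij (Ne.symm hrs) hjr hc1 (by rw [hc2, Finset.pair_comm r s])
  by_cases hsj : s = j
  · subst hsj
    have hir : i ≠ r := fun h => hne (by rw [h])
    have step : P i s r s = P s i s r := by rw [(hP_pair i s r s).1, (hP_pair s i r s).2]
    rw [step]
    exact shared s i r i' j' r' s' (Ne.symm hij) (Ne.symm hrs) hir
      (by rw [hc1, Finset.pair_comm i s]) (by rw [hc2, Finset.pair_comm r s])
  · -- disjoint case
    have hd : ({r, s} : Finset (Fin 4)) = ({i, j} : Finset (Fin 4))ᶜ :=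
      compl_of_disj i j r s hij hrs hri hrj hsi hsj
    have hd2 : ({i, j} : Finset (Fin 4)) = ({r, s} : Finset (Fin 4))ᶜ :=
      compl_of_disj r s i j hrs hij (Ne.symm hri) (Ne.symm hsi) (Ne.symm hrj) (Ne.symm hsj)
    have e1 : ({i', j'} : Finset (Fin 4)) = {r, s} := by rw [hc1, ← hd]
    have e2 : ({r', s'} : Finset (Fin 4)) = {i, j} := by rw [hc2, ← hd2]
    rw [hschlaefli i j r s]
    refine hPinv r s i j i' j' r' s' ?_ ?_
    · rcases pair_eq_cases i' j' r s e1 with ⟨h1, h2⟩ | ⟨h1, h2⟩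
      · exact Or.inl ⟨h1.symm, h2.symm⟩
      · exact Or.inr ⟨h2.symm, h1.symm⟩
    · rcases pair_eq_cases r' s' i j e2 with ⟨h1, h2⟩ | ⟨h1, h2⟩
      · exact Or.inl ⟨h1.symm, h2.symm⟩
      · exact Or.inr ⟨h2.symm, h1.symm⟩
end
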